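/- arXiv:1412.5113 — 9 statements merged into one kernel-verified Lean document; each statement's English description precedes it below -/
import Mathlib

section
/- Let G and H be groups and let τ : G → H be a bijection such that for all x, y ∈ G, τ(xy) = τ(x)τ(y) or τ(xy) = τ(y)τ(x). Then τ is a group isomorphism or a group anti-isomorphism (i.e., τ(xy) = τ(y)τ(x) for all x, y). -/
section ScottAux

variable {G H : Type*} [Group G] [Group H]

private lemma scott_sq (τ : G → H)
    (hhalf : ∀ x y : G, τ (x * y) = τ x * τ y ∨ τ (x * y) = τ y * τ x)
    (b : G) : τ (b * b) = τ b * τ b := by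
  rcases hhalf b b with h | h <;> exact h

private lemma scott_one (τ : G → H)
    (hhalf : ∀ x y : G, τ (x * y) = τ x * τ y ∨ τ (x * y) = τ y * τ x) :
    τ 1 = 1 := by
  have h := scott_sq τ hhalf 1
  rw [mul_one] at h
  exact left_eq_mul.mp h

private lemma scott_inv (τ : G → H)
    (hhalf : ∀ x y : G, τ (x * y) = τ x * τ y ∨ τ (x * y) = τ y * τ x)
    (g : G) : τ g⁻¹ = (τ g)⁻¹ := by
  have h := hhalf g g⁻¹
  rw [show g * g⁻¹ = 1 by group, scott_one τ hhalf] at h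
  rcases h with h | h
  · exact eq_inv_of_mul_eq_one_right h.symm
  · exact eq_inv_of_mul_eq_one_left h.symm

private lemma scott_comm_aux (τ : G → H)
    (hhalf : ∀ x y : G, τ (x * y) = τ x * τ y ∨ τ (x * y) = τ y * τ x)
    (a b : G) (hc : a * b = b * a) (hab : τ (a * b) = τ a * τ b) :
    τ a * τ b = τ b * τ a := by
  rcases hhalf (a * b) b with h3 | h3
  · rw [hab] at h3
    -- h3 : τ (a * b * b) = τ a * τ b * τ b
    have h5 : τ (a * b * (a * b)) = τ (a * b) * τ (a * b) := scott_sq τ hhalf (a * b)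
    rw [hab] at h5
    have hg : a * b * (a * b) = a * (a * b * b) := by
      calc a * b * (a * b) = a * (b * a * b) := by group
        _ = a * (a * b * b) := by rw [← hc]
    rw [hg] at h5
    rcases hhalf a (a * b * b) with h6 | h6 <;> rw [h3] at h6
    · have EQ := h6.symm.trans h5
      calc τ a * τ b
          = (τ a)⁻¹ * ((τ a * (τ a * τ b * τ b)) * (τ a * τ b * (τ a * τ b))⁻¹) * ((τ a)⁻¹)⁻¹ * (τ b * τ a) := by group
        _ = τ b * τ a := by rw [EQ]; group
    · have EQ := h6.symm.trans h5
      calc τ a * τ b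
          = (τ b)⁻¹ * (τ a)⁻¹ * ((τ a * τ b * (τ a * τ b)) * (τ a * τ b * τ b * τ a)⁻¹) * ((τ b)⁻¹ * (τ a)⁻¹)⁻¹ * (τ b * τ a) := by group
        _ = τ b * τ a := by rw [EQ]; group
  · rw [hab] at h3
    -- h3 : τ (a * b * b) = τ b * (τ a * τ b)
    have h4 := hhalf a (b * b)
    rw [scott_sq τ hhalf b, ← mul_assoc] at h4
    rcases h4 with h4 | h4
    · have EQ := h3.symm.trans h4
      calc τ a * τ b
          = ((τ a * (τ b * τ b)) * (τ b * (τ a * τ b))⁻¹) * (τ b * τ a) := by group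
        _ = τ b * τ a := by rw [← EQ]; group
    · have EQ := h3.symm.trans h4
      calc τ a * τ b
          = (τ b)⁻¹ * ((τ b * (τ a * τ b)) * (τ b * τ b * τ a)⁻¹) * ((τ b)⁻¹)⁻¹ * (τ b * τ a) := by group
        _ = τ b * τ a := by rw [EQ]; group

private lemma scott_comm (τ : G → H)
    (hhalf : ∀ x y : G, τ (x * y) = τ x * τ y ∨ τ (x * y) = τ y * τ x)
    (a b : G) (hc : a * b = b * a) : τ a * τ b = τ b * τ a := by
  rcases hhalf a b with h | h
  · exact scott_comm_aux τ hhalf a b hc h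
  · have h' : τ (b * a) = τ b * τ a := by rw [← hc]; exact h
    exact (scott_comm_aux τ hhalf b a hc.symm h').symm

private lemma scott_sym (τ : G → H) (hinj : Function.Injective τ)
    (hhalf : ∀ x y : G, τ (x * y) = τ x * τ y ∨ τ (x * y) = τ y * τ x)
    (a b : G) (h : τ (a * b) = τ a * τ b) : τ (b * a) = τ b * τ a := by
  rcases hhalf b a with h2 | h2
  · exact h2
  · have hba : b * a = a * b := hinj (h2.trans h.symm)
    exact h2.trans (scott_comm τ hhalf a b hba.symm)

private lemma scott_sym' (τ : G → H) (hinj : Function.Injective τ)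
    (hhalf : ∀ x y : G, τ (x * y) = τ x * τ y ∨ τ (x * y) = τ y * τ x)
    (a b : G) (h : τ (a * b) = τ b * τ a) : τ (b * a) = τ a * τ b := by
  rcases hhalf b a with h2 | h2
  · have hba : b * a = a * b := hinj (h2.trans h.symm)
    exact h2.trans (scott_comm τ hhalf b a hba)
  · exact h2

private lemma scott_key (τ : G → H) (hinj : Function.Injective τ)
    (hhalf : ∀ x y : G, τ (x * y) = τ x * τ y ∨ τ (x * y) = τ y * τ x)
    (x y z : G)
    (h1 : τ (x * y) = τ x * τ y) (h2 : τ (x * z) = τ z * τ x)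
    (nxy : τ x * τ y ≠ τ y * τ x) (nxz : τ x * τ z ≠ τ z * τ x) : False := by
  have hyx : τ (y * x) = τ y * τ x := scott_sym τ hinj hhalf x y h1
  have hzx : τ (z * x) = τ x * τ z := scott_sym' τ hinj hhalf x z h2
  have hinvz : τ z⁻¹ = (τ z)⁻¹ := scott_inv τ hhalf z
  have hinvzx : τ (x⁻¹ * z⁻¹) = (τ z)⁻¹ * (τ x)⁻¹ := by
    rw [show x⁻¹ * z⁻¹ = (z * x)⁻¹ by group, scott_inv τ hhalf (z * x), hzx, mul_inv_rev]
  have p1 := hhalf (y * x) (x⁻¹ * z⁻¹)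
  rw [show y * x * (x⁻¹ * z⁻¹) = y * z⁻¹ by group, hyx, hinvzx] at p1
  have p2 := hhalf y z⁻¹
  rw [hinvz] at p2
  rcases p1 with A1 | A2
  · rcases p2 with B1 | B2
    · refine nxz ?_
      have E := A1.symm.trans B1
      calc τ x * τ z
          = τ z * (τ y)⁻¹ * ((τ y * (τ z)⁻¹) * (τ y * τ x * ((τ z)⁻¹ * (τ x)⁻¹))⁻¹) * (τ z * (τ y)⁻¹)⁻¹ * (τ z * τ x) := by group
        _ = τ z * τ x := by rw [E]; group
    · have E12 := A1.symm.trans B2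
      have q1 := hhalf (x * y) z⁻¹
      rw [h1, hinvz] at q1
      have q2 := hhalf x (y * z⁻¹)
      rw [A1] at q2
      rw [show x * (y * z⁻¹) = x * y * z⁻¹ by group] at q2
      rcases q1 with C1 | C2 <;> rcases q2 with D1 | D2
      · refine nxz ?_
        have E := C1.symm.trans D1
        calc τ x * τ z
            = τ z * (τ y)⁻¹ * (τ x)⁻¹ * ((τ x * τ y * (τ z)⁻¹) * (τ x * (τ y * τ x * ((τ z)⁻¹ * (τ x)⁻¹)))⁻¹) * (τ z * (τ y)⁻¹ * (τ x)⁻¹)⁻¹ * (τ z * τ x) := by group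
          _ = τ z * τ x := by rw [E]; group
      · refine nxy ?_
        have E := C1.symm.trans D2
        calc τ x * τ y
            = ((τ x * τ y * (τ z)⁻¹) * (τ y * τ x * ((τ z)⁻¹ * (τ x)⁻¹) * τ x)⁻¹) * (τ y * τ x) := by group
          _ = τ y * τ x := by rw [E]; group
      · refine nxz ?_
        have E := C2.symm.trans D1
        calc τ x * τ z
            = τ z * (((τ z)⁻¹ * (τ x * τ y)) * (τ x * (τ y * τ x * ((τ z)⁻¹ * (τ x)⁻¹)))⁻¹) * (τ x * ((τ y * τ x * ((τ z)⁻¹ * (τ x)⁻¹)) * ((τ z)⁻¹ * τ y)⁻¹) * (τ x)⁻¹) * (τ z)⁻¹ * (τ z * τ x) := by group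
          _ = τ z * τ x := by rw [E, E12]; group
      · refine nxy ?_
        have E := C2.symm.trans D2
        calc τ x * τ y
            = τ z * (((τ z)⁻¹ * (τ x * τ y)) * (τ y * τ x * ((τ z)⁻¹ * (τ x)⁻¹) * τ x)⁻¹) * (((τ y * τ x * ((τ z)⁻¹ * (τ x)⁻¹)) * ((τ z)⁻¹ * τ y)⁻¹)) * (τ z)⁻¹ * (τ y * τ x) := by group
          _ = τ y * τ x := by rw [E, E12]; group
  · rcases p2 with B1 | B2
    · have E21 := A2.symm.trans B1
      have r1 := hhalf y (x * z)
      rw [h2] at r1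
      rw [show y * (x * z) = y * x * z by group] at r1
      have r2 := hhalf (y * x) z
      rw [hyx] at r2
      rcases r1 with F1 | F2 <;> rcases r2 with G1 | G2
      · refine nxz ?_
        have E := F1.symm.trans G1
        calc τ x * τ z
            = (τ y)⁻¹ * ((τ y * τ x * τ z) * (τ y * (τ z * τ x))⁻¹) * ((τ y)⁻¹)⁻¹ * (τ z * τ x) := by group
          _ = τ z * τ x := by rw [E]; group
      · refine nxy ?_
        have E := F1.symm.trans G2
        calc τ x * τ y
            = τ x * ((τ y * (τ z * τ x)) * (τ z * (τ y * τ x))⁻¹) * (τ z * ((τ y * (τ z)⁻¹) * ((τ z)⁻¹ * (τ x)⁻¹ * (τ y * τ x))⁻¹) * (τ z)⁻¹) * (τ x)⁻¹ * (τ y * τ x) := by group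
          _ = τ y * τ x := by rw [E, E21]; group
      · refine nxz ?_
        have E := F2.symm.trans G1
        calc τ x * τ z
            = ((τ y * τ x * τ z) * (τ z * τ x * τ y)⁻¹) * (τ z * τ x * ((τ y * (τ z)⁻¹) * ((τ z)⁻¹ * (τ x)⁻¹ * (τ y * τ x))⁻¹) * (τ z * τ x)⁻¹) * (τ z * τ x) := by group
          _ = τ z * τ x := by rw [E, E21]; group
      · refine nxy ?_
        have E := F2.symm.trans G2
        calc τ x * τ y
            = (τ z)⁻¹ * ((τ z * τ x * τ y) * (τ z * (τ y * τ x))⁻¹) * ((τ z)⁻¹)⁻¹ * (τ y * τ x) := by group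
          _ = τ y * τ x := by rw [E]; group
    · refine nxy ?_
      have E := A2.symm.trans B2
      calc τ x * τ y
          = τ x * τ z * (((τ z)⁻¹ * τ y) * ((τ z)⁻¹ * (τ x)⁻¹ * (τ y * τ x))⁻¹) * (τ x * τ z)⁻¹ * (τ y * τ x) := by group
        _ = τ y * τ x := by rw [E]; group

private lemma scott_claim1 (τ : G → H) (hinj : Function.Injective τ)
    (hhalf : ∀ x y : G, τ (x * y) = τ x * τ y ∨ τ (x * y) = τ y * τ x)
    (g : G) :
    (∀ w, τ (g * w) = τ g * τ w) ∨ (∀ w, τ (g * w) = τ w * τ g) := by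
  by_contra hcon
  push_neg at hcon
  obtain ⟨⟨y, hy⟩, ⟨z, hz⟩⟩ := hcon
  have h1 : τ (g * z) = τ g * τ z := (hhalf g z).resolve_right hz
  have h2 : τ (g * y) = τ y * τ g := (hhalf g y).resolve_left hy
  have n1 : τ g * τ z ≠ τ z * τ g := fun e => hz (h1.trans e)
  have n2 : τ g * τ y ≠ τ y * τ g := fun e => hy (h2.trans e.symm)
  exact scott_key τ hinj hhalf g z y h1 h2 n1 n2

end ScottAux

/-- Scott's theorem: every half-isomorphism of groups is an isomorphism
or an anti-isomorphism. -/
theorem scott_half_isomorphism {G H : Type*} [Group G] [Group H] (τ : G → H)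
    (hbij : Function.Bijective τ)
    (hhalf : ∀ x y : G, τ (x * y) = τ x * τ y ∨ τ (x * y) = τ y * τ x) :
    (∀ x y : G, τ (x * y) = τ x * τ y) ∨ (∀ x y : G, τ (x * y) = τ y * τ x) := by
  have hinj := hbij.injective
  by_contra hcon
  push_neg at hcon
  obtain ⟨⟨a, b, hab⟩, ⟨c, d, hcd⟩⟩ := hcon
  have haL : ∀ w, τ (a * w) = τ w * τ a := by
    rcases scott_claim1 τ hinj hhalf a with h | h
    · exact absurd (h b) hab
    · exact h
  have hcK : ∀ w, τ (c * w) = τ c * τ w := by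
    rcases scott_claim1 τ hinj hhalf c with h | h
    · exact h
    · exact absurd (h d) hcd
  have haL' : ∀ w, τ (a⁻¹ * w) = τ w * (τ a)⁻¹ := by
    intro w
    have h := haL (a⁻¹ * w)
    rw [show a * (a⁻¹ * w) = w by group] at h
    exact eq_mul_inv_of_mul_eq h.symm
  rcases scott_claim1 τ hinj hhalf (a * c) with hK | hL
  · apply hab
    have e1 : τ (a * b) = τ (a * c) * τ (c⁻¹ * b) := by
      have h := hK (c⁻¹ * b)
      rw [show a * c * (c⁻¹ * b) = a * b by group] at h
      exact h
    have hcK' : τ (c⁻¹ * b) = (τ c)⁻¹ * τ b := by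
      have h := hcK (c⁻¹ * b)
      rw [show c * (c⁻¹ * b) = b by group] at h
      exact eq_inv_mul_of_mul_eq h.symm
    have hac : τ (a * c) = τ a * τ c := by
      have h := hK c⁻¹
      rw [show a * c * c⁻¹ = a by group, scott_inv τ hhalf c] at h
      exact mul_inv_eq_iff_eq_mul.mp h.symm
    rw [e1, hcK', hac]; group
  · apply hcd
    have e1 : τ (c * d) = τ (a * c * d) * (τ a)⁻¹ := by
      have h := haL' (a * c * d)
      rw [show a⁻¹ * (a * c * d) = c * d by group] at h
      exact h
    have e2 : τ (a * c * d) = τ d * τ (a * c) := hL d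
    have e3 : τ (a * c) = τ c * τ a := haL c
    rw [e1, e2, e3]; group
end

section
/- Let G and H be groups and τ : G → H a half-isomorphism. Then τ is a semi-isomorphism: for all u, v ∈ G, τ(uvu) = τ(u)τ(v)τ(u). -/
private lemma sq_aux {G H : Type*} [Group G] [Group H] (τ : G → H)
    (hhalf : ∀ x y : G, τ (x * y) = τ x * τ y ∨ τ (x * y) = τ y * τ x) (x : G) :
    τ (x * x) = τ x * τ x := by
  rcases hhalf x x with h | h <;> exact h

private lemma comm_aux {G H : Type*} [Group G] [Group H] (τ : G → H)
    (hhalf : ∀ x y : G, τ (x * y) = τ x * τ y ∨ τ (x * y) = τ y * τ x)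
    (u v : G) (hc : u * v = v * u) : τ u * τ v = τ v * τ u := by
  have hB2 := sq_aux τ hhalf v
  have key : u * v * (u * v) = u * (u * v * v) := by
    have h1 : u * (u * v * v) = u * (v * u) * v := by rw [hc]; group
    rw [h1]; group
  have hE' : τ (u * v * (u * v)) = τ (u * v) * τ (u * v) := by
    rcases hhalf (u * v) (u * v) with h | h <;> exact h
  have hX1 := hhalf (u * v) v
  have hX2 := hhalf u (v * v)
  rw [← mul_assoc] at hX2
  have hT2 := hhalf u (u * v * v)
  rw [← key] at hT2
  rcases hhalf u v with hP | hP <;> rw [hP] at hE' hX1 <;> rw [hB2] at hX2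
  · -- τ (u*v) = τ u * τ v
    rcases hX1 with hX | hX
    · rw [hX] at hT2
      rcases hT2 with h | h <;> rw [hE'] at h
      · simp only [mul_assoc] at h
        replace h := mul_left_cancel h
        simp only [← mul_assoc] at h
        exact (mul_right_cancel h).symm
      · simp only [mul_assoc] at h
        exact mul_left_cancel (mul_left_cancel h)
    · rcases hX2 with h | h <;> rw [hX] at h
      · simp only [← mul_assoc] at h
        exact (mul_right_cancel h).symm
      · simp only [mul_assoc] at h
        exact mul_left_cancel h
  · -- τ (u*v) = τ v * τ u
    rcases hX1 with hX | hX
    · rcases hX2 with h | h <;> rw [hX] at h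
      · simp only [← mul_assoc] at h
        exact (mul_right_cancel h).symm
      · simp only [mul_assoc] at h
        exact mul_left_cancel h
    · rw [hX] at hT2
      rcases hT2 with h | h <;> rw [hE'] at h
      · simp only [← mul_assoc] at h
        exact (mul_right_cancel (mul_right_cancel h)).symm
      · simp only [mul_assoc] at h
        replace h := mul_left_cancel h
        simp only [← mul_assoc] at h
        exact mul_right_cancel h

/-- Every half-isomorphism of groups is a semi-isomorphism:
`τ (u * v * u) = τ u * τ v * τ u`. -/
theorem half_isomorphism_is_semi {G H : Type*} [Group G] [Group H] (τ : G → H)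
    (hbij : Function.Bijective τ)
    (hhalf : ∀ x y : G, τ (x * y) = τ x * τ y ∨ τ (x * y) = τ y * τ x) :
    ∀ u v : G, τ (u * v * u) = τ u * τ v * τ u := by
  intro u v
  have hT1 := hhalf (u * v) u
  by_cases hc : u * v = v * u
  · have hAB := comm_aux τ hhalf u v hc
    rcases hhalf u v with hP | hP <;> rw [hP] at hT1
    · rcases hT1 with h | h
      · exact h
      · rw [h, mul_assoc, hAB]
    · rcases hT1 with h | h
      · rw [h, hAB]
      · rw [h, mul_assoc]
  · have hPQ : τ (u * v) ≠ τ (v * u) := fun h => hc (hbij.1 h)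
    have hT2 := hhalf u (v * u)
    rw [← mul_assoc] at hT2
    have hE' : τ ((u * v) * (u * v)) = τ (u * v) * τ (u * v) := by
      rcases hhalf (u * v) (u * v) with h | h <;> exact h
    have hkey : (u * v) * (u * v) = u * v * u * v := by group
    rw [hkey] at hE'
    have hE2 := hhalf (u * v * u) v
    rcases hhalf u v with hP | hP <;> rcases hhalf v u with hQ | hQ
    · -- τ(uv) = AB, τ(vu) = BA
      rw [hP, hQ] at hPQ
      rw [hP] at hT1 hE'
      rw [hQ] at hT2
      rcases hT1 with h1 | h1
      · exact h1
      · rcases hT2 with h2 | h2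
        · exact absurd (mul_left_cancel (h1.symm.trans h2)) hPQ
        · rcases hE2 with h3 | h3 <;> rw [hE', h1] at h3
          · simp only [mul_assoc] at h3
            replace h3 := mul_left_cancel h3
            simp only [← mul_assoc] at h3
            exact absurd (mul_right_cancel h3).symm hPQ
          · simp only [← mul_assoc] at h3
            replace h3 := mul_right_cancel h3
            rw [h2]
            exact h3.symm
    · exact absurd (hP.trans hQ.symm) hPQ
    · exact absurd (hP.trans hQ.symm) hPQ
    · -- τ(uv) = BA, τ(vu) = AB
      rw [hP, hQ] at hPQ
      rw [hP] at hT1 hE'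
      rw [hQ] at hT2
      rcases hT1 with h1 | h1
      · rcases hT2 with h2 | h2
        · rcases hE2 with h3 | h3 <;> rw [hE', h1] at h3
          · simp only [mul_assoc] at h3
            exact absurd (mul_left_cancel (mul_left_cancel h3)) hPQ
          · simp only [mul_assoc] at h3
            replace h3 := mul_left_cancel h3
            simp only [← mul_assoc] at h3
            have hab := mul_right_cancel h3
            rw [h1, hab]
        · exact h2
      · rw [h1, mul_assoc]
end

section
/- Let G and H be groups and τ : G → H a half-isomorphism. Then for every subgroup K of G, the image τ(K) is a subgroup of H. -/
private lemma half_cancel {H : Type*} [Group H] {a b : H}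
    (h : b * a * (b * a) = a * (b * (b * a)) ∨ b * a * (b * a) = b * (b * a) * a) :
    a * b = b * a := by
  rcases h with h | h
  · have h1 : b * a * b * a = a * b * b * a := by
      rw [mul_assoc (b*a), h]; group
    have h2 : b * a * b = a * b * b := mul_right_cancel h1
    exact (mul_right_cancel h2).symm
  · have h1 : b * (a * (b * a)) = b * (b * a * a) := by
      rw [show b * (a * (b * a)) = b * a * (b * a) by group, h]; group
    have h2 : a * (b * a) = b * a * a := mul_left_cancel h1
    have h3 : a * b * a = b * a * a := by rw [mul_assoc]; exact h2
    exact mul_right_cancel h3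

/-- The image of a subgroup under a half-isomorphism of groups is a subgroup. -/
theorem half_isomorphism_image_subgroup {G H : Type*} [Group G] [Group H] (τ : G → H)
    (hbij : Function.Bijective τ)
    (hhalf : ∀ x y : G, τ (x * y) = τ x * τ y ∨ τ (x * y) = τ y * τ x) :
    ∀ K : Subgroup G, ∃ K' : Subgroup H, (K' : Set H) = τ '' (K : Set G) := by
  have hone : τ 1 = 1 := by
    have h := hhalf 1 1
    rw [one_mul] at h
    rcases h with h | h <;> exact right_eq_mul.mp h
  have hinv : ∀ x : G, τ x⁻¹ = (τ x)⁻¹ := by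
    intro x
    have h := hhalf x x⁻¹
    rw [mul_inv_cancel, hone] at h
    rcases h with h | h
    · exact eq_inv_of_mul_eq_one_right h.symm
    · exact eq_inv_of_mul_eq_one_left h.symm
  -- key commutation lemma
  have hcomm : ∀ x y : G, x * y = y * x → τ (x * y) = τ y * τ x → τ x * τ y = τ y * τ x := by
    intro x y hc hba
    set a := τ x with ha
    set b := τ y with hb
    have hyy : τ (y * y) = b * b := by rcases hhalf y y with h | h <;> exact h
    -- compute τ (x * (y * y))
    have hxyy : τ (x * (y * y)) = b * (b * a) ∨ a * b = b * a := by
      have h1 := hhalf (x * y) y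
      have h2 := hhalf x (y * y)
      rw [hba] at h1
      rw [hyy] at h2
      rw [show x * y * y = x * (y * y) by group] at h1
      rw [← hb] at h1
      rw [← ha] at h2
      rcases h1 with h1 | h1 <;> rcases h2 with h2 | h2
      · -- b*a*b = a*(b*b)
        right
        have h3 : b * a * b = a * b * b := by rw [← h1, h2]; group
        exact (mul_right_cancel h3).symm
      · -- b*a*b = (b*b)*a : bab = bba ⇒ ab = ba
        right
        have h3 : b * (a * b) = b * (b * a) := by rw [← mul_assoc, ← h1, h2]; group
        exact mul_left_cancel h3
      · left; rw [h1]
      · left; rw [h1]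
    rcases hxyy with hxyy | hdone
    · -- now use (x*y)*(x*y)
      have h4 : τ (x * y * (x * y)) = b * a * (b * a) := by
        rcases hhalf (x * y) (x * y) with h | h <;> rw [h, hba]
      have h5 : x * y * (x * y) = x * (x * (y * y)) := by
        rw [show x * y * (x * y) = x * (y * x * y) by group, ← hc]; group
      rw [h5] at h4
      have h6 := hhalf x (x * (y * y))
      rw [hxyy, h4] at h6
      exact half_cancel h6
    · exact hdone
  -- closure
  intro K
  refine ⟨{ carrier := τ '' (K : Set G),
            one_mem' := ⟨1, K.one_mem, hone⟩,
            mul_mem' := ?_,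
            inv_mem' := ?_ }, rfl⟩
  · rintro p q ⟨x, hx, rfl⟩ ⟨y, hy, rfl⟩
    rcases hhalf x y with h | h
    · exact ⟨x * y, K.mul_mem hx hy, h⟩
    · rcases hhalf y x with h' | h'
      · have hc : x * y = y * x := hbij.injective (h.trans h'.symm)
        have := hcomm x y hc h
        exact ⟨x * y, K.mul_mem hx hy, h.trans this.symm⟩
      · exact ⟨y * x, K.mul_mem hy hx, h'⟩
  · rintro p ⟨x, hx, rfl⟩
    exact ⟨x⁻¹, K.inv_mem hx, hinv x⟩
end

section
/- Let G and H be groups and τ : G → H a half-isomorphism. Then τ maps the center of G onto the center of H: τ(Z(G)) = Z(H). -/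
private lemma half_key {G H : Type*} [Group G] [Group H] (τ : G → H)
    (hhalf : ∀ x y : G, τ (x * y) = τ x * τ y ∨ τ (x * y) = τ y * τ x)
    (z g : G) (hz : ∀ x : G, z * x = x * z)
    (hc : τ (z * g) = τ z * τ g) : τ z * τ g = τ g * τ z := by
  set a := τ z with ha
  set b := τ g with hb
  have hzz : τ (z * z) = a * a := by rcases hhalf z z with h | h <;> exact h
  -- τ (z*z*g) from the decomposition z*(z*g)
  have h1 : τ (z * (z * g)) = a * (a * b) ∨ τ (z * (z * g)) = (a * b) * a := by
    rcases hhalf z (z * g) with h | h <;> rw [hc] at h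
    · exact Or.inl h
    · exact Or.inr h
  -- τ (z*z*g) from the decomposition (z*z)*g
  have h2 : τ (z * z * g) = (a * a) * b ∨ τ (z * z * g) = b * (a * a) := by
    rcases hhalf (z * z) g with h | h <;> rw [hzz] at h
    · exact Or.inl h
    · exact Or.inr h
  rw [← mul_assoc] at h1
  rcases h1 with h1 | h1
  · -- τ (z*z*g) = a*(a*b);  now use the square
    have hsq : τ ((z * g) * (z * g)) = (a * b) * (a * b) := by
      rcases hhalf (z * g) (z * g) with h | h <;> rw [hc] at h <;> exact h
    have heq : (z * g) * (z * g) = (z * z * g) * g := by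
      have := hz g
      calc (z * g) * (z * g) = z * (g * z) * g := by group
        _ = z * (z * g) * g := by rw [← hz g]
        _ = (z * z * g) * g := by group
    rw [heq] at hsq
    have h3 : τ ((z * z * g) * g) = (a * (a * b)) * b ∨
        τ ((z * z * g) * g) = b * (a * (a * b)) := by
      rcases hhalf (z * z * g) g with h | h <;> rw [h1] at h
      · exact Or.inl h
      · exact Or.inr h
    rcases h3 with h3 | h3
    · -- (a*b)*(a*b) = (a*(a*b))*b  ⇒  b*a = a*b
      rw [hsq] at h3
      have e1 : a * ((b * a) * b) = a * ((a * b) * b) := by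
        calc a * ((b * a) * b) = (a * b) * (a * b) := by group
          _ = (a * (a * b)) * b := h3
          _ = a * ((a * b) * b) := by group
      have e2 : (b * a) * b = (a * b) * b := mul_left_cancel e1
      exact (mul_right_cancel e2).symm
    · -- (a*b)*(a*b) = b*(a*(a*b))  ⇒  a*b = b*a
      rw [hsq] at h3
      have e1 : ((a * b) * a) * b = ((b * a) * a) * b := by
        calc ((a * b) * a) * b = (a * b) * (a * b) := by group
          _ = b * (a * (a * b)) := h3
          _ = ((b * a) * a) * b := by group
      exact mul_right_cancel (mul_right_cancel e1)
  · -- τ (z*z*g) = (a*b)*a ; compare with h2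
    rcases h2 with h2 | h2
    · -- (a*b)*a = (a*a)*b ⇒ b*a = a*b
      rw [h1] at h2
      have e1 : a * (b * a) = a * (a * b) := by
        calc a * (b * a) = (a * b) * a := by group
          _ = (a * a) * b := h2
          _ = a * (a * b) := by group
      exact (mul_left_cancel e1).symm
    · -- (a*b)*a = b*(a*a) ⇒ a*b = b*a
      rw [h1] at h2
      have e1 : (a * b) * a = (b * a) * a := by
        calc (a * b) * a = b * (a * a) := h2
          _ = (b * a) * a := by group
      exact mul_right_cancel e1

private lemma half_key' {G H : Type*} [Group G] [Group H] (τ : G → H)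
    (hhalf : ∀ x y : G, τ (x * y) = τ x * τ y ∨ τ (x * y) = τ y * τ x)
    (z g : G) (hz : ∀ x : G, z * x = x * z)
    (hc : τ (z * g) = τ g * τ z) : τ z * τ g = τ g * τ z := by
  have key := half_key (fun x => MulOpposite.op (τ x))
    (fun x y => by rcases hhalf x y with h | h <;> simp [h]) z g hz
    (by simp [hc])
  simp only [← MulOpposite.op_mul, MulOpposite.op_inj] at key
  exact key.symm

/-- A half-isomorphism of groups maps the center onto the center. -/
theorem half_isomorphism_center {G H : Type*} [Group G] [Group H] (τ : G → H)
    (hbij : Function.Bijective τ)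
    (hhalf : ∀ x y : G, τ (x * y) = τ x * τ y ∨ τ (x * y) = τ y * τ x) :
    τ '' (Subgroup.center G : Set G) = (Subgroup.center H : Set H) := by
  apply Set.Subset.antisymm
  · rintro _ ⟨z, hz, rfl⟩
    rw [SetLike.mem_coe] at hz ⊢
    rw [Subgroup.mem_center_iff]
    intro h
    obtain ⟨g, rfl⟩ := hbij.2 h
    have hz' : ∀ x : G, z * x = x * z := fun x => (Subgroup.mem_center_iff.1 hz x).symm
    rcases hhalf z g with hc | hc
    · exact (half_key τ hhalf z g hz' hc).symm
    · exact (half_key' τ hhalf z g hz' hc).symm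
  · intro h hh
    rw [SetLike.mem_coe] at hh
    obtain ⟨g, rfl⟩ := hbij.2 h
    refine ⟨g, ?_, rfl⟩
    rw [SetLike.mem_coe, Subgroup.mem_center_iff]
    intro x
    apply hbij.1
    have hcomm := Subgroup.mem_center_iff.1 hh
    have h1 : τ (x * g) = τ x * τ g := by
      rcases hhalf x g with h | h
      · exact h
      · rw [h, hcomm (τ x)]
    have h2 : τ (g * x) = τ x * τ g := by
      rcases hhalf g x with h | h
      · rw [h, ← hcomm (τ x)]
      · exact h
    rw [h1, h2]
end

section
/- Let G and H be groups and τ : G → H a half-isomorphism. Then the inverse bijection τ⁻¹ : H → G is also a half-isomorphism. -/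
/-- If a half-homomorphism satisfies `τ (a*b) = τ a * τ b` for a commuting pair `a b`,
then `τ a` and `τ b` commute. -/
theorem half_hom_comm_aux {G H : Type*} [Group G] [Group H] (τ : G → H)
    (hhalf : ∀ x y : G, τ (x * y) = τ x * τ y ∨ τ (x * y) = τ y * τ x)
    (a b : G) (hc : a * b = b * a) (hab : τ (a * b) = τ a * τ b) :
    τ a * τ b = τ b * τ a := by
  set u := τ a with hu
  set v := τ b with hv
  have hb2 : τ (b * b) = v * v := by rcases hhalf b b with h | h <;> exact h
  have hcomm2 : a * (b * b) = (b * b) * a := by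
    calc a * (b * b) = (a * b) * b := by group
      _ = (b * a) * b := by rw [hc]
      _ = b * (a * b) := by group
      _ = b * (b * a) := by rw [hc]
      _ = (b * b) * a := by group
  -- Step A: either τ (a*(b*b)) = u*(v*v), or we are done.
  have habb : τ (a * (b * b)) = u * (v * v) ∨ u * v = v * u := by
    have e1 : a * (b * b) = (a * b) * b := by group
    rcases hhalf (a * b) b with h1 | h1
    · left; rw [e1, h1, hab, ← hv]; group
    · rcases hhalf (b * b) a with h2 | h2
      · -- τ (a*(b*b)) = v*(u*v) and = (v*v)*u
        right
        rw [hab, ← hv] at h1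
        rw [hb2, ← hu] at h2
        have e2 : v * (u * v) = (v * v) * u := by
          rw [← h1, ← h2, ← e1, hcomm2]
        have e3 : v * (u * v) = v * (v * u) := by rw [e2]; group
        have := mul_left_cancel e3
        exact this
      · left; rw [hcomm2, h2, hb2]
  rcases habb with habb | hdone
  · -- Step B
    have h3 : τ ((a * b) * (a * b)) = (u * v) * (u * v) := by
      rcases hhalf (a * b) (a * b) with h | h <;> rw [h, hab]
    have key : (a * b) * (a * b) = a * (a * (b * b)) := by
      calc (a * b) * (a * b) = a * ((b * a) * b) := by group
        _ = a * ((a * b) * b) := by rw [← hc]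
        _ = a * (a * (b * b)) := by group
    rcases hhalf a (a * (b * b)) with h4 | h4 <;> rw [habb, ← hu] at h4
    · -- (u*v)*(u*v) = u*(u*(v*v))
      have e5 : (u * v) * (u * v) = u * (u * (v * v)) := by rw [← h3, key, h4]
      have e : u * (v * (u * v)) = u * (u * (v * v)) := by
        rw [← e5]; group
      have e2 : (v * u) * v = (u * v) * v := by
        have := mul_left_cancel e
        rw [← mul_assoc] at this
        rw [this]; group
      exact (mul_right_cancel e2).symm
    · -- (u*v)*(u*v) = (u*(v*v))*u
      have e5 : (u * v) * (u * v) = (u * (v * v)) * u := by rw [← h3, key, h4]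
      have e : u * (v * (u * v)) = u * (v * (v * u)) := by
        have h6 : (u * v) * (u * v) = u * (v * (u * v)) := by group
        rw [h6] at e5
        rw [e5]; group
      exact mul_left_cancel (mul_left_cancel e)
  · exact hdone

/-- The inverse of a half-isomorphism of groups is a half-isomorphism. -/
theorem half_isomorphism_inverse {G H : Type*} [Group G] [Group H] (τ : G ≃ H)
    (hhalf : ∀ x y : G, τ (x * y) = τ x * τ y ∨ τ (x * y) = τ y * τ x) :
    ∀ x y : H, τ.symm (x * y) = τ.symm x * τ.symm y ∨
      τ.symm (x * y) = τ.symm y * τ.symm x := by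
  intro x y
  set a := τ.symm x with ha
  set b := τ.symm y with hb
  have hx : τ a = x := τ.apply_symm_apply x
  have hy : τ b = y := τ.apply_symm_apply y
  rcases hhalf a b with h1 | h1
  · left
    rw [hx, hy] at h1
    rw [← h1, Equiv.symm_apply_apply]
  · rw [hx, hy] at h1
    rcases hhalf b a with h2 | h2
    · rw [hx, hy] at h2
      -- τ (a*b) = y*x and τ (b*a) = y*x, so a*b = b*a
      have hcomm : a * b = b * a := τ.injective (by rw [h1, h2])
      have hyx : y * x = x * y := by
        have := half_hom_comm_aux τ hhalf b a hcomm.symm (by rw [h2, hx, hy])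
        rw [hx, hy] at this
        exact this
      left
      rw [hyx] at h1
      rw [← h1, Equiv.symm_apply_apply]
    · right
      rw [hx, hy] at h2
      rw [← h2, Equiv.symm_apply_apply]
end

section
/- The set of half-automorphisms of a group G forms a group under composition. -/
section HalfAutoAux

variable {G : Type*} [Group G]

private lemma half_one (f : Equiv.Perm G)
    (hf : ∀ x y : G, f (x * y) = f x * f y ∨ f (x * y) = f y * f x) : f 1 = 1 := by
  have h := hf 1 1
  rw [mul_one] at h
  rcases h with h | h <;> exact left_eq_mul.mp h

private lemma half_inv_val (f : Equiv.Perm G)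
    (hf : ∀ x y : G, f (x * y) = f x * f y ∨ f (x * y) = f y * f x) (g : G) :
    f g⁻¹ = (f g)⁻¹ := by
  have h := hf g g⁻¹
  rw [mul_inv_cancel, half_one f hf] at h
  rcases h with h | h
  · exact (inv_eq_of_mul_eq_one_right h.symm).symm
  · exact eq_inv_of_mul_eq_one_left h.symm

private lemma cancel_aux1 {x y : G} (h : x * (y * (x * y)) = (y * x) * (x * y)) :
    x * y = y * x :=
  mul_right_cancel (b := x * y) (by rw [mul_assoc]; exact h)

private lemma cancel_aux2 {x y : G} (h : x * (y * (x * y)) = (x * y) * (y * x)) :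
    x * y = y * x :=
  mul_left_cancel (a := x * y) (b := x * y) (by rw [mul_assoc]; exact h)

private lemma cancel_aux3 {x y : G} (h : (y * (x * y)) * x = (y * x) * (x * y)) :
    x * y = y * x := by
  have h2 : (y * x) * (y * x) = (y * x) * (x * y) := by
    rw [← h]; group
  exact (mul_left_cancel h2).symm

private lemma cancel_aux4 {x y : G} (h : (y * (x * y)) * x = (x * y) * (y * x)) :
    x * y = y * x := by
  have h2 : (y * x) * (y * x) = (x * y) * (y * x) := by
    rw [← h]; group
  exact (mul_right_cancel h2).symm

private lemma cancel_aux5 {x y : G} (h : x⁻¹ * ((x * y) * y) = y * ((x * y) * x⁻¹)) :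
    x * y = y * x := by
  have h2 : y * y = y * (x * y * x⁻¹) := by rw [← h]; group
  have h3 : y = x * y * x⁻¹ := mul_left_cancel h2
  have := congrArg (· * x) h3
  simpa [mul_assoc] using this.symm

private lemma cancel_aux6 {x y : G} (h : x⁻¹ * ((x * y) * y) = ((x * y) * x⁻¹) * y) :
    x * y = y * x := by
  have h2 : y * y = (x * y * x⁻¹) * y := by rw [← h]; group
  have h3 : y = x * y * x⁻¹ := mul_right_cancel h2
  have := congrArg (· * x) h3
  simpa [mul_assoc] using this.symm

private lemma cancel_aux7 {x y : G} (h : ((x * y) * y) * x⁻¹ = y * ((x * y) * x⁻¹)) :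
    x * y = y * x := by
  have h2 : ((x * y) * y) * x⁻¹ * x = (y * (x * y)) * x⁻¹ * x := by
    rw [h]; group
  have h3 : (x * y) * y = y * (x * y) := by simpa [mul_assoc] using h2
  have h4 : (x * y) * y = (y * x) * y := by rw [h3, mul_assoc]
  exact mul_right_cancel h4

private lemma cancel_aux8 {x y : G} (h : ((x * y) * y) * x⁻¹ = ((x * y) * x⁻¹) * y) :
    x * y = y * x := by
  have h2 : (x * y) * (y * x⁻¹) = (x * y) * (x⁻¹ * y) := by
    rw [← mul_assoc, ← mul_assoc]; exact h
  have h3 : y * x⁻¹ = x⁻¹ * y := mul_left_cancel h2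
  have h4 := congrArg (fun t => x * t * x) h3
  simpa [mul_assoc] using h4

private lemma half_inv_perm (f : Equiv.Perm G)
    (hf : ∀ x y : G, f (x * y) = f x * f y ∨ f (x * y) = f y * f x) (x y : G) :
    f⁻¹ (x * y) = f⁻¹ x * f⁻¹ y ∨ f⁻¹ (x * y) = f⁻¹ y * f⁻¹ x := by
  by_contra hcon
  push_neg at hcon
  obtain ⟨h1, h2⟩ := hcon
  set a := f⁻¹ x with ha
  set b := f⁻¹ y with hb
  set z := f⁻¹ (x * y) with hzdef
  have hinj : Function.Injective f := f.injective
  have hfa : f a = x := f.apply_symm_apply x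
  have hfb : f b = y := f.apply_symm_apply y
  have hfz : f z = x * y := f.apply_symm_apply (x * y)
  -- f (a*b) = y*x and f (b*a) = y*x
  have hfab : f (a * b) = y * x := by
    rcases hf a b with h | h
    · rw [hfa, hfb] at h
      exact absurd (hinj (hfz.trans h.symm)) h1
    · rw [hfa, hfb] at h; exact h
  have hfba : f (b * a) = y * x := by
    rcases hf b a with h | h
    · rw [hfa, hfb] at h; exact h
    · rw [hfa, hfb] at h
      exact absurd (hinj (hfz.trans h.symm)) h2
  have hcab : Commute a b := hinj (hfab.trans hfba.symm)
  have hxy : x * y ≠ y * x := fun h =>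
    h1 (hinj (hfz.trans (h.trans hfab.symm)))
  have hfainv : f a⁻¹ = x⁻¹ := by rw [half_inv_val f hf, hfa]
  have hfbinv : f b⁻¹ = y⁻¹ := by rw [half_inv_val f hf, hfb]
  -- f (a⁻¹ * z) = (x*y) * x⁻¹
  have hfaz : f (a⁻¹ * z) = (x * y) * x⁻¹ := by
    rcases hf a⁻¹ z with h | h
    · rw [hfainv, hfz, inv_mul_cancel_left] at h
      have : a⁻¹ * z = b := hinj (h.trans hfb.symm)
      exact absurd (by rw [← this, mul_inv_cancel_left]) h1
    · rw [hfainv, hfz] at h; exact h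
  -- z commutes with b
  have hfzb' : f (z * b⁻¹) = y⁻¹ * (x * y) := by
    rcases hf z b⁻¹ with h | h
    · rw [hfz, hfbinv, mul_inv_cancel_right] at h
      have : z * b⁻¹ = a := hinj (h.trans hfa.symm)
      exact absurd (by rw [← this, inv_mul_cancel_right]) h1
    · rw [hfz, hfbinv] at h; exact h
  have hfbz' : f (b⁻¹ * z) = y⁻¹ * (x * y) := by
    rcases hf b⁻¹ z with h | h
    · rw [hfbinv, hfz] at h; exact h
    · rw [hfbinv, hfz, mul_inv_cancel_right] at h
      have : b⁻¹ * z = a := hinj (h.trans hfa.symm)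
      exact absurd (by rw [← this, mul_inv_cancel_left]) h2
  have hczb : Commute z b := by
    have e : z * b⁻¹ = b⁻¹ * z := hinj (hfzb'.trans hfbz'.symm)
    have := congrArg (fun w => b * w * b) e
    exact (by simpa [mul_assoc] using this.symm : z * b = b * z)
  -- main case split
  rcases hf z b with hzb | hzb <;> rw [hfz, hfb] at hzb
  · -- f (z*b) = (x*y)*y
    have e1 := hf a⁻¹ (z * b)
    rw [hfainv, hzb] at e1
    have e2 := hf b (a⁻¹ * z)
    rw [hfb, hfaz] at e2
    have harg : a⁻¹ * (z * b) = b * (a⁻¹ * z) := by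
      rw [hczb.eq, ← mul_assoc, ← mul_assoc, (hcab.inv_left).eq]
    rw [harg] at e1
    rcases e1 with e1 | e1 <;> rcases e2 with e2 | e2 <;> rw [e1] at e2
    · exact hxy (cancel_aux5 e2)
    · exact hxy (cancel_aux6 e2)
    · exact hxy (cancel_aux7 e2)
    · exact hxy (cancel_aux8 e2)
  · -- f (z*b) = y*(x*y)
    have e1 := hf a (z * b)
    rw [hfa, hzb] at e1
    have e2 := hf (a * b) z
    rw [hfab, hfz] at e2
    have harg : a * (z * b) = (a * b) * z := by
      rw [mul_assoc, hczb.eq]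
    rw [harg] at e1
    rcases e1 with e1 | e1 <;> rcases e2 with e2 | e2 <;> rw [e1] at e2
    · exact hxy (cancel_aux1 e2)
    · exact hxy (cancel_aux2 e2)
    · exact hxy (cancel_aux3 e2)
    · exact hxy (cancel_aux4 e2)

end HalfAutoAux

private def halfSubgroup (G : Type*) [Group G] : Subgroup (Equiv.Perm G) where
  carrier := {τ : Equiv.Perm G |
    ∀ x y : G, τ (x * y) = τ x * τ y ∨ τ (x * y) = τ y * τ x}
  mul_mem' := by
    intro σ τ hσ hτ x y
    rcases hτ x y with h | h <;> rw [Equiv.Perm.mul_apply, h] <;>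
      [rcases hσ (τ x) (τ y) with h' | h'; rcases hσ (τ y) (τ x) with h' | h'] <;>
      simp only [Equiv.Perm.mul_apply, h'] <;> tauto
  one_mem' := by
    intro x y; left; rfl
  inv_mem' := by
    intro τ hτ x y
    exact half_inv_perm τ hτ x y

/-- The half-automorphisms of a group form a group under composition:
they constitute a subgroup of the permutation group of `G`. -/
theorem half_automorphisms_form_group (G : Type*) [Group G] :
    ∃ S : Subgroup (Equiv.Perm G), ∀ τ : Equiv.Perm G,
      τ ∈ S ↔ ∀ x y : G, τ (x * y) = τ x * τ y ∨ τ (x * y) = τ y * τ x :=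
  ⟨halfSubgroup G, fun _ => Iff.rfl⟩
end

section
/- Let G₁ and G₂ be groups and τᵢ : Gᵢ → Hᵢ half-isomorphisms for i = 1, 2 such that τ₁ is an isomorphism and τ₂ is an anti-isomorphism. Then the product map τ₁ × τ₂ : G₁ × G₂ → H₁ × H₂ is a half-isomorphism if and only if G₁ is abelian or G₂ is abelian. -/
/-- The product of an isomorphism and an anti-isomorphism is a
half-isomorphism iff one of the two source groups is abelian. -/
theorem prod_half_isomorphism_iff {G₁ G₂ H₁ H₂ : Type*}
    [Group G₁] [Group G₂] [Group H₁] [Group H₂]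
    (τ₁ : G₁ → H₁) (τ₂ : G₂ → H₂)
    (hbij₁ : Function.Bijective τ₁) (hbij₂ : Function.Bijective τ₂)
    (hiso : ∀ x y : G₁, τ₁ (x * y) = τ₁ x * τ₁ y)
    (hanti : ∀ x y : G₂, τ₂ (x * y) = τ₂ y * τ₂ x) :
    (∀ p q : G₁ × G₂,
        Prod.map τ₁ τ₂ (p * q) = Prod.map τ₁ τ₂ p * Prod.map τ₁ τ₂ q ∨
        Prod.map τ₁ τ₂ (p * q) = Prod.map τ₁ τ₂ q * Prod.map τ₁ τ₂ p) ↔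
      (∀ a b : G₁, a * b = b * a) ∨ (∀ a b : G₂, a * b = b * a) := by
  constructor
  · intro h
    by_contra hc
    push_neg at hc
    obtain ⟨⟨x, y, hxy⟩, u, v, huv⟩ := hc
    rcases h (x, u) (y, v) with hl | hr
    · apply huv
      apply hbij₂.injective
      have h2 : τ₂ (u * v) = τ₂ u * τ₂ v := congrArg Prod.snd hl
      rw [hanti u v] at h2
      rw [hanti u v, hanti v u, h2]
    · apply hxy
      apply hbij₁.injective
      have h1 : τ₁ (x * y) = τ₁ y * τ₁ x := congrArg Prod.fst hr
      rw [hiso y x, h1]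
  · rintro (hab | hab) p q
    · right
      ext
      · simp [hiso, hab p.1 q.1, mul_comm]
      · simp [hanti]
    · left
      ext
      · simp [hiso]
      · simp [hanti, hab p.2 q.2]
end

section
/- There exists a loop Q of order 8 (given by an explicit Cayley table) that is automorphic but not Moufang, and the permutation φ = (3 5)(4 6)(7 8) of its elements is a half-automorphism of Q that is neither an automorphism nor an anti-automorphism. -/
/-- The Cayley table (0-indexed) of the automorphic non-Moufang loop `Q₂`
of order 8. -/
def q2 : Fin 8 → Fin 8 → Fin 8 :=
  ![![0, 1, 2, 3, 4, 5, 6, 7],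
    ![1, 0, 3, 2, 5, 4, 7, 6],
    ![2, 3, 0, 1, 6, 7, 5, 4],
    ![3, 2, 1, 0, 7, 6, 4, 5],
    ![4, 5, 7, 6, 0, 1, 3, 2],
    ![5, 4, 6, 7, 1, 0, 2, 3],
    ![6, 7, 4, 5, 2, 3, 1, 0],
    ![7, 6, 5, 4, 3, 2, 0, 1]]

/-- The permutation `φ = (3 5)(4 6)(7 8)` (here 0-indexed: `(2 4)(3 5)(6 7)`). -/
def phi2 : Fin 8 → Fin 8 := ![0, 1, 4, 5, 2, 3, 7, 6]

/-- Left division table: `q2 a (ldq a y) = y`. -/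
def ldq : Fin 8 → Fin 8 → Fin 8 :=
  ![![0, 1, 2, 3, 4, 5, 6, 7],
    ![1, 0, 3, 2, 5, 4, 7, 6],
    ![2, 3, 0, 1, 7, 6, 4, 5],
    ![3, 2, 1, 0, 6, 7, 5, 4],
    ![4, 5, 7, 6, 0, 1, 3, 2],
    ![5, 4, 6, 7, 1, 0, 2, 3],
    ![7, 6, 4, 5, 2, 3, 0, 1],
    ![6, 7, 5, 4, 3, 2, 1, 0]]

/-- Right division table: `q2 (rdq a y) a = y`. -/
def rdq : Fin 8 → Fin 8 → Fin 8 :=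
  ![![0, 1, 2, 3, 4, 5, 6, 7],
    ![1, 0, 3, 2, 5, 4, 7, 6],
    ![2, 3, 0, 1, 6, 7, 5, 4],
    ![3, 2, 1, 0, 7, 6, 4, 5],
    ![4, 5, 6, 7, 0, 1, 2, 3],
    ![5, 4, 7, 6, 1, 0, 3, 2],
    ![7, 6, 5, 4, 3, 2, 0, 1],
    ![6, 7, 4, 5, 2, 3, 1, 0]]

lemma ldq_q2 : ∀ a x : Fin 8, ldq a (q2 a x) = x := by decide
lemma rdq_q2 : ∀ a x : Fin 8, rdq a (q2 x a) = x := by decide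

lemma lmap_aut : ∀ a b u v : Fin 8,
    ldq (q2 a b) (q2 a (q2 b (q2 u v))) =
      q2 (ldq (q2 a b) (q2 a (q2 b u))) (ldq (q2 a b) (q2 a (q2 b v))) := by decide

lemma rmap_aut : ∀ a b u v : Fin 8,
    rdq (q2 a b) (q2 (q2 (q2 u v) a) b) =
      q2 (rdq (q2 a b) (q2 (q2 u a) b)) (rdq (q2 a b) (q2 (q2 v a) b)) := by decide

lemma tmap_aut : ∀ a u v : Fin 8,
    ldq a (q2 (q2 u v) a) = q2 (ldq a (q2 u a)) (ldq a (q2 v a)) := by decide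

/-- `Q₂` is a loop (with identity 1 and cancellation), it is automorphic
(all inner mappings `ℓ_{a,b}`, `r_{a,b}`, `T_a` are automorphisms), it is not
Moufang, and `φ` is a half-automorphism of `Q₂` which is neither an
automorphism nor an anti-automorphism. -/
theorem q2_automorphic_not_moufang_half_automorphism :
    -- loop axioms: identity and two-sided cancellation
    (∀ x : Fin 8, q2 0 x = x ∧ q2 x 0 = x) ∧
    (∀ a : Fin 8, Function.Bijective (fun x => q2 a x) ∧
      Function.Bijective (fun x => q2 x a)) ∧
    -- automorphic: the left inner mappings ℓ_{a,b} are automorphisms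
    (∀ a b : Fin 8, ∀ g : Fin 8 → Fin 8,
      (∀ z, q2 (q2 a b) (g z) = q2 a (q2 b z)) →
      ∀ u v, g (q2 u v) = q2 (g u) (g v)) ∧
    -- the right inner mappings r_{a,b} are automorphisms
    (∀ a b : Fin 8, ∀ g : Fin 8 → Fin 8,
      (∀ z, q2 (g z) (q2 a b) = q2 (q2 z a) b) →
      ∀ u v, g (q2 u v) = q2 (g u) (g v)) ∧
    -- the middle inner mappings T_a are automorphisms
    (∀ a : Fin 8, ∀ g : Fin 8 → Fin 8,
      (∀ z, q2 a (g z) = q2 z a) →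
      ∀ u v, g (q2 u v) = q2 (g u) (g v)) ∧
    -- not Moufang
    (∃ x y z : Fin 8, q2 (q2 (q2 x y) x) z ≠ q2 x (q2 y (q2 x z))) ∧
    -- φ is a half-automorphism
    Function.Bijective phi2 ∧
    (∀ x y : Fin 8, phi2 (q2 x y) = q2 (phi2 x) (phi2 y) ∨
      phi2 (q2 x y) = q2 (phi2 y) (phi2 x)) ∧
    -- φ is neither an automorphism nor an anti-automorphism
    (∃ x y : Fin 8, phi2 (q2 x y) ≠ q2 (phi2 x) (phi2 y)) ∧
    (∃ x y : Fin 8, phi2 (q2 x y) ≠ q2 (phi2 y) (phi2 x)) := by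
  refine ⟨by decide, by decide, ?_, ?_, ?_, by decide, by decide, by decide,
    by decide, by decide⟩
  · intro a b g h u v
    have hg : ∀ z, g z = ldq (q2 a b) (q2 a (q2 b z)) := fun z => by
      rw [← h z, ldq_q2]
    rw [hg, hg, hg]; exact lmap_aut a b u v
  · intro a b g h u v
    have hg : ∀ z, g z = rdq (q2 a b) (q2 (q2 z a) b) := fun z => by
      rw [← h z, rdq_q2]
    rw [hg, hg, hg]; exact rmap_aut a b u v
  · intro a g h u v
    have hg : ∀ z, g z = ldq a (q2 z a) := fun z => by
      rw [← h z, ldq_q2]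
    rw [hg, hg, hg]; exact tmap_aut a u v
end

section
/- Let G and H be finite groups of odd order and τ : G → H a half-isomorphism. Then τ is an isomorphism or an anti-isomorphism, and in particular H is isomorphic to G. -/
namespace HalfIsoAux

variable {K : Type*} [Group K]

section
variable (m : K → K → K)
  (hh : ∀ x y : K, m x y = x * y ∨ m x y = y * x)
  (ha : ∀ x y z : K, m (m x y) z = m x (m y z))
  (hF1 : ∀ x y : K, x * x * y = y * (x * x) → x * y = y * x)

include hh ha hF1

lemma msq (x : K) : m x x = x * x := (hh x x).elim id id

lemma lemA {a b : K} (hab : m a b = a * b) (hne : a * b ≠ b * a) :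
    m (a * b) b = a * b * b := by
  have he : m (m a b) b = m a (m b b) := ha a b b
  rw [hab, msq m hh ha hF1 b] at he
  rcases hh (a * b) b with h1 | h1 <;> rcases hh a (b * b) with h2 | h2
  · exact h1
  · exfalso
    have h3 : (a * b) * b = (b * b) * a := by rw [← h1, he, h2]
    rw [mul_assoc] at h3
    exact hne (hF1 b a h3.symm).symm
  · exfalso
    have h3 : b * (a * b) = a * (b * b) := by rw [← h1, he, h2]
    rw [← mul_assoc, ← mul_assoc] at h3
    exact hne (mul_right_cancel h3).symm
  · exfalso
    have h3 : b * (a * b) = (b * b) * a := by rw [← h1, he, h2]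
    rw [mul_assoc b b a] at h3
    exact hne (mul_left_cancel h3)

lemma lemA' {a b : K} (hab : m b a = b * a) (hne : a * b ≠ b * a) :
    m (b * a) a = b * a * a := by
  have he : m (m b a) a = m b (m a a) := ha b a a
  rw [hab, msq m hh ha hF1 a] at he
  rcases hh (b * a) a with h1 | h1 <;> rcases hh b (a * a) with h2 | h2
  · exact h1
  · exfalso
    have h3 : (b * a) * a = (a * a) * b := by rw [← h1, he, h2]
    rw [mul_assoc] at h3
    exact hne (hF1 a b h3.symm)
  · exfalso
    have h3 : a * (b * a) = b * (a * a) := by rw [← h1, he, h2]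
    rw [← mul_assoc, ← mul_assoc] at h3
    exact hne (mul_right_cancel h3)
  · exfalso
    have h3 : a * (b * a) = (a * a) * b := by rw [← h1, he, h2]
    rw [mul_assoc a a b] at h3
    exact hne (mul_left_cancel h3).symm

lemma lemL2 {a b : K} (hab : m a b = a * b) (hne : a * b ≠ b * a) :
    m b a = b * a := by
  rcases hh b a with h | h
  · exact h
  exfalso
  have hA := lemA m hh ha hF1 hab hne
  have e : m (m a b) (m a b) = m a (m (m b a) b) := by
    rw [ha a b (m a b), ha b a b]
  rw [h] at e
  rw [hA] at e
  rw [hab] at e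
  rw [msq m hh ha hF1 (a * b)] at e
  -- e : (a*b)*(a*b) = m a (a*b*b)
  rcases hh a (a * b * b) with h2 | h2 <;> rw [h2] at e
  · rw [mul_assoc a b (a * b)] at e
    have h4 := mul_left_cancel e
    rw [← mul_assoc] at h4
    exact hne (mul_right_cancel h4).symm
  · rw [mul_assoc (a * b) b a] at e
    exact hne (mul_left_cancel e)

lemma lemL2' {a b : K} (hab : m a b = b * a) (hne : a * b ≠ b * a) :
    m b a = a * b := by
  rcases hh b a with h | h
  · exfalso
    have hA := lemA' m hh ha hF1 h hne
    have e : m (m a b) (m a b) = m (m (m a b) a) b := by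
      rw [ha (m a b) a b]
    rw [hab] at e
    rw [hA] at e
    rw [msq m hh ha hF1 (b * a)] at e
    -- e : (b*a)*(b*a) = m (b*a*a) b
    rcases hh (b * a * a) b with h2 | h2 <;> rw [h2] at e
    · rw [mul_assoc (b * a) a b] at e
      exact hne (mul_left_cancel e).symm
    · rw [mul_assoc b a (b * a)] at e
      have h4 := mul_left_cancel e
      rw [← mul_assoc] at h4
      exact hne (mul_right_cancel h4)
  · exact h

lemma lemS {a b c : K} (hab : m a b = a * b) (hne : a * b ≠ b * a)
    (hbc : m b c = c * b) (hbcne : b * c ≠ c * b) : False := by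
  have hcb : m c b = b * c := lemL2' m hh ha hF1 hbc hbcne
  -- forced value of m b (b*c)
  have hkey : m b (b * c) = (b * c) * b := by
    have he : m b (m c b) = m (m b c) b := (ha b c b).symm
    rw [hcb, hbc] at he
    rcases hh b (b * c) with h1 | h1
    · exfalso
      rcases hh (c * b) b with h2 | h2
      · have h3 : b * (b * c) = (c * b) * b := by rw [← h1, he, h2]
        rw [← mul_assoc, mul_assoc c b b] at h3
        exact hbcne (hF1 b c h3)
      · have h3 : b * (b * c) = b * (c * b) := by rw [← h1, he, h2]
        exact hbcne (mul_left_cancel h3)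
    · exact h1
  -- the triple product dichotomy
  have he2 : m (a * b) c = m a (c * b) := by
    have e := ha a b c
    rw [hab, hbc] at e
    exact e
  rcases hh (a * b) c with hT1 | hT1 <;> rcases hh a (c * b) with hT2 | hT2
  · -- (a*b)*c = a*(c*b)
    have h3 : (a * b) * c = a * (c * b) := by rw [← hT1, he2, hT2]
    rw [mul_assoc] at h3
    exact hbcne (mul_left_cancel h3)
  · -- case 2 : habc : (a*b)*c = (c*b)*a
    have habc : (a * b) * c = (c * b) * a := by rw [← hT1, he2, hT2]
    have e1 : m (m (m a b) c) b = m (m a b) (m c b) := ha (m a b) c b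
    rw [hab, hT1, hcb] at e1
    -- e1 : m ((a*b)*c) b = m (a*b) (b*c)
    rcases hh ((a * b) * c) b with hA | hA <;> rcases hh (a * b) (b * c) with hB | hB
    · have h3 : ((a * b) * c) * b = (a * b) * (b * c) := by rw [← hA, e1, hB]
      rw [mul_assoc (a * b) c b] at h3
      exact hbcne (mul_left_cancel h3).symm
    · have h3 : ((a * b) * c) * b = (b * c) * (a * b) := by rw [← hA, e1, hB]
      rw [habc, mul_assoc (c * b) a b] at h3
      exact hbcne (mul_right_cancel h3).symm
    · have h3 : b * ((a * b) * c) = (a * b) * (b * c) := by rw [← hA, e1, hB]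
      rw [← mul_assoc b (a * b) c, ← mul_assoc (a * b) b c] at h3
      have h4 := mul_right_cancel h3
      rw [← mul_assoc] at h4
      exact hne (mul_right_cancel h4).symm
    · have h3 : b * ((a * b) * c) = (b * c) * (a * b) := by rw [← hA, e1, hB]
      rw [mul_assoc b c (a * b)] at h3
      have h4 := mul_left_cancel h3
      rw [habc, mul_assoc c b a] at h4
      exact hne (mul_left_cancel h4).symm
  · -- case 1 : hT1 : m (a*b) c = c*(a*b), hT2 : m a (c*b) = a*(c*b)
    have h3 : c * (a * b) = a * (c * b) := by rw [← hT1, he2, hT2]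
    have hca : c * a = a * c := by
      have h4 : (c * a) * b = (a * c) * b := by rw [mul_assoc, mul_assoc]; exact h3
      exact mul_right_cancel h4
    have e1 : m (m (m a b) c) b = m (m a b) (m c b) := ha (m a b) c b
    have e2 : m (m a b) (m c b) = m a (m b (m c b)) := ha a b (m c b)
    rw [hab, hT1, hcb] at e1
    -- e1 : m (c*(a*b)) b = m (a*b) (b*c)
    rw [hab, hcb, hkey] at e2
    -- e2 : m (a*b) (b*c) = m a ((b*c)*b)
    have eAC : m (c * (a * b)) b = m a ((b * c) * b) := e1.trans e2
    rcases hh (c * (a * b)) b with hA | hA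
    · rcases hh (a * b) (b * c) with hB | hB
      · have h5 : (c * (a * b)) * b = (a * b) * (b * c) := by rw [← hA, e1, hB]
        rw [h3] at h5
        rw [mul_assoc a (c * b) b] at h5
        rw [mul_assoc c b b] at h5
        rw [mul_assoc a b (b * c)] at h5
        rw [← mul_assoc b b c] at h5
        have h6 := mul_left_cancel h5
        exact hbcne (hF1 b c h6.symm)
      · rcases hh a ((b * c) * b) with hC | hC
        · have h5 : (c * (a * b)) * b = a * ((b * c) * b) := by rw [← hA, eAC, hC]
          rw [← mul_assoc a (b * c) b] at h5
          have h6 := mul_right_cancel h5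
          rw [h3] at h6
          exact hbcne (mul_left_cancel h6).symm
        · have h5 : (b * c) * (a * b) = ((b * c) * b) * a := by rw [← hB, e2, hC]
          rw [mul_assoc (b * c) b a] at h5
          exact hne (mul_left_cancel h5)
    · rcases hh a ((b * c) * b) with hC | hC
      · have h5 : b * (c * (a * b)) = a * ((b * c) * b) := by rw [← hA, eAC, hC]
        rw [← mul_assoc c a b] at h5
        rw [← mul_assoc b (c * a) b] at h5
        rw [← mul_assoc a (b * c) b] at h5
        have h6 := mul_right_cancel h5
        rw [hca] at h6
        rw [← mul_assoc, ← mul_assoc] at h6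
        exact hne (mul_right_cancel h6).symm
      · have h5 : b * (c * (a * b)) = ((b * c) * b) * a := by rw [← hA, eAC, hC]
        rw [← mul_assoc b c (a * b), mul_assoc (b * c) b a] at h5
        exact hne (mul_left_cancel h5)
  · -- c*(a*b) = (c*b)*a
    have h3 : c * (a * b) = (c * b) * a := by rw [← hT1, he2, hT2]
    rw [mul_assoc c b a] at h3
    exact hne (mul_left_cancel h3)

lemma main {a b c d : K} (hab : m a b = a * b) (hne : a * b ≠ b * a)
    (hcd : m c d = d * c) (hcdne : c * d ≠ d * c) : False := by
  have hba : m b a = b * a := lemL2 m hh ha hF1 hab hne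
  have hdc : m d c = c * d := lemL2' m hh ha hF1 hcd hcdne
  have hax : ∀ x, m a x = a * x := by
    intro x
    rcases hh a x with h | h
    · exact h
    by_cases hc : a * x = x * a
    · rw [h, ← hc]
    · exact (lemS m hh ha hF1 hba (Ne.symm hne) h hc).elim
  have hbx : ∀ x, m b x = b * x := by
    intro x
    rcases hh b x with h | h
    · exact h
    by_cases hc : b * x = x * b
    · rw [h, ← hc]
    · exact (lemS m hh ha hF1 hab hne h hc).elim
  have hxc : ∀ x, m x c = c * x := by
    intro x
    rcases hh x c with h | h
    · by_cases hc : x * c = c * x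
      · rw [h, hc]
      · exact (lemS m hh ha hF1 h hc hcd hcdne).elim
    · exact h
  have hcx : ∀ x, m c x = x * c := by
    intro x
    rcases hh c x with h | h
    · by_cases hc : c * x = x * c
      · rw [h, hc]
      · have h2 : m x c = x * c := lemL2 m hh ha hF1 h hc
        exact (lemS m hh ha hF1 h2 (Ne.symm hc) hcd hcdne).elim
    · exact h
  have hxd : ∀ x, m x d = d * x := by
    intro x
    rcases hh x d with h | h
    · by_cases hc : x * d = d * x
      · rw [h, hc]
      · exact (lemS m hh ha hF1 h hc hdc (Ne.symm hcdne)).elim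
    · exact h
  have had : a * d = d * a := (hax d).symm.trans (hxd a)
  have hbc2 : b * c = c * b := (hbx c).symm.trans (hxc b)
  -- the final contradiction
  have e : m (m a c) (m b d) = m a (m c (m b d)) := ha a c (m b d)
  rw [hbx d, hcx (b * d), hax ((b * d) * c), hax c] at e
  -- e : m (a*c) (b*d) = a*((b*d)*c)
  rcases hh (a * c) (b * d) with h | h <;> rw [h] at e
  · -- (a*c)*(b*d) = a*((b*d)*c)
    rw [mul_assoc a c (b * d)] at e
    have h4 := mul_left_cancel e
    -- h4 : c*(b*d) = (b*d)*c
    rw [← mul_assoc c b d, ← hbc2, mul_assoc b c d, mul_assoc b d c] at h4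
    exact hcdne (mul_left_cancel h4)
  · -- (b*d)*(a*c) = a*((b*d)*c)
    rw [mul_assoc b d (a * c), ← mul_assoc d a c, ← had, mul_assoc a d c,
      ← mul_assoc b a (d * c), mul_assoc b d c, ← mul_assoc a b (d * c)] at e
    exact hne (mul_right_cancel e).symm

end

end HalfIsoAux

/-- A half-isomorphism between finite groups of odd order is an isomorphism or
an anti-isomorphism; in particular the groups are isomorphic. -/
theorem half_isomorphism_odd_order {G H : Type*} [Group G] [Group H]
    [Fintype G] [Fintype H]
    (hG : Odd (Fintype.card G)) (hH : Odd (Fintype.card H)) (τ : G → H)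
    (hbij : Function.Bijective τ)
    (hhalf : ∀ x y : G, τ (x * y) = τ x * τ y ∨ τ (x * y) = τ y * τ x) :
    ((∀ x y : G, τ (x * y) = τ x * τ y) ∨ (∀ x y : G, τ (x * y) = τ y * τ x)) ∧
      Nonempty (G ≃* H) := by
  classical
  obtain ⟨k, hk⟩ := hH
  have hpow : ∀ x : H, (x * x) ^ (k + 1) = x := by
    intro x
    have h1 : x ^ Fintype.card H = 1 := pow_card_eq_one
    calc (x * x) ^ (k + 1) = (x ^ 2) ^ (k + 1) := by rw [sq]
      _ = x ^ (2 * (k + 1)) := (pow_mul x 2 (k + 1)).symm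
      _ = x ^ (Fintype.card H + 1) := by congr 1; omega
      _ = x ^ Fintype.card H * x := by rw [pow_succ]
      _ = x := by rw [h1, one_mul]
  have hF1 : ∀ x y : H, x * x * y = y * (x * x) → x * y = y * x := by
    intro x y hxy
    have hc : Commute (x * x) y := hxy
    have hc2 : Commute ((x * x) ^ (k + 1)) y := hc.pow_left (k + 1)
    rw [hpow x] at hc2
    exact hc2
  let e : G ≃ H := Equiv.ofBijective τ hbij
  have het : ∀ u : G, e u = τ u := fun _ => rfl
  have hsymm : ∀ u : G, e.symm (τ u) = u := fun u => by
    rw [← het]; exact e.symm_apply_apply u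
  have happ : ∀ x : H, τ (e.symm x) = x := fun x => by
    rw [← het]; exact e.apply_symm_apply x
  have hh : ∀ x y : H,
      τ (e.symm x * e.symm y) = x * y ∨ τ (e.symm x * e.symm y) = y * x := by
    intro x y
    rcases hhalf (e.symm x) (e.symm y) with h | h
    · left; rw [h, happ, happ]
    · right; rw [h, happ, happ]
  have hassoc : ∀ x y z : H,
      τ (e.symm (τ (e.symm x * e.symm y)) * e.symm z)
        = τ (e.symm x * e.symm (τ (e.symm y * e.symm z))) := by
    intro x y z
    rw [hsymm, hsymm, mul_assoc]
  have hdich : (∀ x y : G, τ (x * y) = τ x * τ y) ∨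
      (∀ x y : G, τ (x * y) = τ y * τ x) := by
    by_cases h1 : ∀ x y : G, τ (x * y) = τ x * τ y
    · exact Or.inl h1
    by_cases h2 : ∀ x y : G, τ (x * y) = τ y * τ x
    · exact Or.inr h2
    exfalso
    push_neg at h1 h2
    obtain ⟨u, v, huv⟩ := h1
    obtain ⟨p, q, hpq⟩ := h2
    have hA : τ (u * v) = τ v * τ u := (hhalf u v).resolve_left huv
    have hB : τ (p * q) = τ p * τ q := (hhalf p q).resolve_right hpq
    have h5 : τ p * τ q ≠ τ q * τ p := fun hcon => hpq (hB.trans hcon)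
    have h6 : τ u * τ v ≠ τ v * τ u := fun hcon => huv (hA.trans hcon.symm)
    have hmpq : τ (e.symm (τ p) * e.symm (τ q)) = τ p * τ q := by
      rw [hsymm, hsymm]; exact hB
    have hmuv : τ (e.symm (τ u) * e.symm (τ v)) = τ v * τ u := by
      rw [hsymm, hsymm]; exact hA
    exact HalfIsoAux.main (fun x y => τ (e.symm x * e.symm y))
      hh hassoc hF1 hmpq h5 hmuv h6
  refine ⟨hdich, ?_⟩
  rcases hdich with hhom | hanti
  · exact ⟨MulEquiv.mk' e (fun u v => hhom u v)⟩
  · refine ⟨MulEquiv.mk' (e.trans (Equiv.inv H)) ?_⟩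
    intro u v
    show (τ (u * v))⁻¹ = (τ u)⁻¹ * (τ v)⁻¹
    rw [hanti u v, mul_inv_rev]
end
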